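/- arXiv:2302.02848 — 3 statements merged into one kernel-verified Lean document; each statement's English description precedes it below -/
import Mathlib

section
/- Correctness of the Shift-And algorithm on plain text: let P be a string of length m over alphabet Σ and T a string over Σ. Define the sequence of bit-vectors B_{-1} = 0 and B_i = ((B_{i-1} << 1) + 1) ∧ M[T[i]], where M[c][j] = 1 iff P[j] = c (with the convention that the shift is applied at the end of the previous step, i.e., B_i[j] = (j = 0 ∨ B_{i-1}[j-1] = 1) ∧ (P[j] = T[i])). Then for all i and all 0 ≤ j ≤ m-1, B_i[j] = 1 if and only if T[i-j..i] = P[0..j]. -/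
/-- The Shift-And bit-vectors on plain text:
`B 0 j = (j = 0) ∧ (P j = T 0)` (since `B_{-1} = 0`), and
`B (i+1) j = (j = 0 ∨ B i (j-1)) ∧ (P j = T (i+1))`. -/
def shiftAndText {σ : Type*} [DecidableEq σ] (T P : ℕ → σ) : ℕ → ℕ → Bool
  | 0, j => decide (j = 0) && (P j == T 0)
  | i + 1, j =>
      (decide (j = 0) || (decide (0 < j) && shiftAndText T P i (j - 1))) && (P j == T (i + 1))

theorem shiftAndText_correct_aux {σ : Type*} [DecidableEq σ] (T P : ℕ → σ)
    (i j : ℕ) :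
    shiftAndText T P i j = true ↔ (j ≤ i ∧ ∀ k ≤ j, T (i - j + k) = P k) := by
  induction i generalizing j with
  | zero =>
    simp only [shiftAndText, Bool.and_eq_true, decide_eq_true_eq, beq_iff_eq,
      Nat.le_zero]
    constructor
    · rintro ⟨rfl, h⟩
      refine ⟨rfl, fun k hk => ?_⟩
      obtain rfl : k = 0 := Nat.le_zero.mp hk
      exact h.symm
    · rintro ⟨rfl, h⟩
      exact ⟨rfl, (h 0 le_rfl).symm⟩
  | succ i ih =>
    cases j with
    | zero =>
      simp [shiftAndText]
      exact ⟨Eq.symm, Eq.symm⟩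
    | succ j =>
      simp only [shiftAndText, Nat.succ_ne_zero, decide_false, Bool.false_or,
        Nat.succ_sub_one, Bool.and_eq_true, decide_eq_true_eq, beq_iff_eq,
        Nat.succ_le_succ_iff, Nat.zero_lt_succ, decide_true, Bool.true_and]
      rw [ih]
      constructor
      · rintro ⟨⟨hji, hmatch⟩, hlast⟩
        refine ⟨hji, fun k hk => ?_⟩
        rcases Nat.lt_or_ge k (j + 1) with hk' | hk'
        · have := hmatch k (by omega)
          have : T (i - j + k) = P k := this
          convert this using 2
          omega
        · have : k = j + 1 := by omega
          subst this
          have : i + 1 - (j + 1) + (j + 1) = i + 1 := by omega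
          rw [this]
          exact hlast.symm
      · rintro ⟨hji, hmatch⟩
        refine ⟨⟨hji, fun k hk => ?_⟩, ?_⟩
        · have := hmatch k (by omega)
          convert this using 2
          omega
        · have := hmatch (j + 1) le_rfl
          have h2 : i + 1 - (j + 1) + (j + 1) = i + 1 := by omega
          rw [h2] at this
          exact this.symm

/-- Correctness of Shift-And on plain text: for all `i` and all `j < m`,
`B_i[j] = 1` iff `j ≤ i` and `T[i-j..i] = P[0..j]`. -/
theorem shiftAndText_correct {σ : Type*} [DecidableEq σ] (T P : ℕ → σ) (m : ℕ)
    (i j : ℕ) (hj : j < m) :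
    shiftAndText T P i j = true ↔ (j ≤ i ∧ ∀ k ≤ j, T (i - j + k) = P k) :=
  shiftAndText_correct_aux T P i j
end

section
/- Generalized Shift-And on DAGs, merging step: if for each in-neighbour v_k of node v_i, bit B_k[j] = 1 iff the pattern prefix P[0..j] matches some path ending at v_k, then the bit-vector D_i defined by D_i[0] = (P[0] = ℓ(v_i)) and, for j ≥ 1, D_i[j] = (P[j] = ℓ(v_i)) ∧ (∃ k ∈ in(v_i), B_k[j-1] = 1), satisfies: D_i[j] = 1 iff there is a path in the graph ending at v_i whose labels spell P[0..j]. -/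
/-- `MatchEnd E ℓ P j v` means there is a path in the graph ending at `v`
whose labels spell the prefix `P[0..j]`. -/
inductive MatchEnd {V σ : Type*} (E : V → V → Prop) (ℓ : V → σ) (P : ℕ → σ) : ℕ → V → Prop
  | zero (v : V) : ℓ v = P 0 → MatchEnd E ℓ P 0 v
  | succ (j : ℕ) (u v : V) : MatchEnd E ℓ P j u → E u v → ℓ v = P (j + 1) →
      MatchEnd E ℓ P (j + 1) v

/-- Merging step of generalized Shift-And on graphs: if each in-neighbour `u` of `v`
carries a correct bit-vector `B u`, then the merged vector `D` is correct at `v`. -/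
theorem shiftAnd_merge_correct {V σ : Type*} (E : V → V → Prop) (ℓ : V → σ) (P : ℕ → σ)
    (v : V) (B : V → ℕ → Bool) (D : ℕ → Bool)
    (hB : ∀ u, E u v → ∀ j, (B u j = true ↔ MatchEnd E ℓ P j u))
    (hD0 : D 0 = true ↔ ℓ v = P 0)
    (hDsucc : ∀ j, (D (j + 1) = true ↔ (ℓ v = P (j + 1) ∧ ∃ u, E u v ∧ B u j = true))) :
    ∀ j, D j = true ↔ MatchEnd E ℓ P j v := by
  intro j
  cases j with
  | zero =>
    rw [hD0]
    constructor
    · exact fun h => MatchEnd.zero v h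
    · rintro (_ | _); assumption
  | succ j =>
    rw [hDsucc]
    constructor
    · rintro ⟨hlv, u, huv, hb⟩
      exact MatchEnd.succ j u v ((hB u huv j).1 hb) huv hlv
    · rintro (_ | ⟨_, u, _, hm, huv, hlv⟩)
      exact ⟨hlv, u, huv, (hB u huv j).2 hm⟩
end

section
/- Invariant 2 (accumulated result correctness): with V_i defined as in the level-DAG Shift-And recursion, define R_t = ∃ i ≤ t, V_i[m-1]. Then R_{n-1} = true if and only if the pattern P (of length m) has at least one occurrence as the label of a path in G. -/
/-- Invariant 2: with `Vq` as in the level-DAG Shift-And recursion and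
`R_t = ∃ i ≤ t, Vq i (m-1)`, the final value `R_{n-1}` is true iff `P` (of length `m`)
occurs as the label of a path in `G`. -/
theorem levelDAG_invariant2 {σ : Type*} (n m : ℕ) (hm : 2 ≤ m)
    (E : Fin n → Fin n → Prop) (ℓ : Fin n → σ) (P : ℕ → σ)
    (htopo : ∀ u v : Fin n, E u v → (u : ℕ) < v)
    (Vq : Fin n → ℕ → Bool)
    (hVq : ∀ (i : Fin n) (j : ℕ),
      Vq i j = true ↔
        (P j = ℓ i ∧ (j = 0 ∨ (1 ≤ j ∧ ∃ k : Fin n, E k i ∧ Vq k (j - 1) = true)))) :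
    (∃ i : Fin n, Vq i (m - 1) = true) ↔ (∃ v : Fin n, MatchEnd E ℓ P (m - 1) v) := by
  have key : ∀ (j : ℕ) (i : Fin n), Vq i j = true ↔ MatchEnd E ℓ P j i := by
    intro j
    induction j with
    | zero =>
      intro i
      rw [hVq]
      constructor
      · rintro ⟨h, -⟩
        exact MatchEnd.zero i h.symm
      · intro h
        cases h with
        | zero _ h' => exact ⟨h'.symm, Or.inl rfl⟩
    | succ j ih =>
      intro i
      rw [hVq]
      constructor
      · rintro ⟨h, h2⟩
        rcases h2 with h2 | ⟨-, k, hk, hVk⟩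
        · exact absurd h2 (Nat.succ_ne_zero j)
        · simp only [Nat.add_sub_cancel] at hVk
          exact MatchEnd.succ j k i ((ih k).mp hVk) hk h.symm
      · intro h
        cases h with
        | succ _ u _ hu hE hl =>
          refine ⟨hl.symm, Or.inr ⟨Nat.succ_le_succ (Nat.zero_le j), u, hE, ?_⟩⟩
          simpa using (ih u).mpr hu
  exact exists_congr (fun i => key (m - 1) i)
end
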